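/- For every a ∈ I^im and every (ν,J) ∈ RC(∞): κ_a(ν,J) = 0 if and only if κ_a^*(ν,J) = 0. -/

import Mathlib

/-! Rigged configurations for generalized Kac–Moody (Borcherds) algebras. -/

/-- A Borcherds–Cartan matrix: integer matrix with `A a a = 2` or `A a a` nonpositive even,
nonpositive off-diagonal entries, and `A a b = 0 ↔ A b a = 0`. -/
structure IsBorcherdsCartan {I : Type*} (A : I → I → ℤ) : Prop where
  diag : ∀ a, A a a = 2 ∨ (A a a ≤ 0 ∧ Even (A a a))
  offdiag : ∀ a b, a ≠ b → A a b ≤ 0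
  zero_iff : ∀ a b, A a b = 0 ↔ A b a = 0

/-- A (raw) rigged configuration: for each color `a ∈ I`, a multiset of pairs
`(row length, rigging)`.  Rows of length `0` with rigging `0` are treated implicitly by the
operators below. -/
abbrev RCraw (I : Type*) := I → Multiset (ℕ × ℤ)

variable {I : Type*} [DecidableEq I]

/-- The empty rigged configuration `(ν_∅, J_∅)`. -/
def emptyRC : RCraw I := fun _ => 0

/-- `|ν^(b)|`, the number of boxes of color `b`. -/
def rcSize (ν : RCraw I) (b : I) : ℤ := ((ν b).map fun p => (p.1 : ℤ)).sum

/-- The vacancy number `p_i^(a) = -∑_b A a b ∑_{rows j of ν^(b)} min i j`. -/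
noncomputable def vac (A : I → I → ℤ) (ν : RCraw I) (a : I) (i : ℕ) : ℤ :=
  -∑ᶠ b, A a b * ((ν b).map fun p => (min i p.1 : ℤ)).sum

/-- The limiting vacancy number `p_∞^(a) = -∑_b A a b |ν^(b)| = ⟨h_a, wt(ν,J)⟩`. -/
noncomputable def pInf (A : I → I → ℤ) (ν : RCraw I) (a : I) : ℤ :=
  -∑ᶠ b, A a b * rcSize ν b

/-- Minimum of a multiset of integers together with `0` (the rigging of the implicit
length-`0` rows). -/
def minWith0 (s : Multiset ℤ) : ℤ := s.fold min 0

/-- Minimum of a nonempty multiset of integers (junk value `0` on the empty multiset). -/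
def minPosRows (s : Multiset ℤ) : ℤ := s.fold min (s.fold max 0)

/-- Maximum of a multiset of naturals together with `0`. -/
def maxWith0 (s : Multiset ℕ) : ℕ := s.fold max 0

/-- Minimum of a nonempty multiset of naturals (junk value on the empty multiset). -/
def minPosRowsN (s : Multiset ℕ) : ℕ := s.fold min (s.fold max 0)

/-- The crystal operator `f_a` on rigged configurations: add a box to a row of maximal
length among the rows of `ν^(a)` whose rigging equals the smallest rigging `x` (with the
length-`0` rows of rigging `0` included), give the new row the rigging `x - A a a / 2`, and
change all other riggings so that the coriggings are preserved. -/
def fOp (A : I → I → ℤ) (a : I) (ν : RCraw I) : RCraw I :=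
  let M := ν a
  let x := minWith0 (M.map Prod.snd)
  let ℓ := maxWith0 ((M.filter fun p => p.2 = x).map Prod.fst)
  fun b =>
    let adj : Multiset (ℕ × ℤ) → Multiset (ℕ × ℤ) :=
      Multiset.map fun p => (p.1, p.2 - if ℓ < p.1 then A b a else 0)
    if b = a then adj (M.erase (ℓ, x)) + {(ℓ + 1, x - A a a / 2)} else adj (ν b)

/-- Auxiliary for `eOp`: remove a box from a row of minimal (positive) length among the
rows of `ν^(a)` with rigging `x`, give it the rigging `x + A a a / 2` (dropping the row if
its length becomes `0`), and change all other riggings so that the coriggings are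
preserved. -/
def eRemove (A : I → I → ℤ) (a : I) (ν : RCraw I) (x : ℤ) : RCraw I :=
  let M := ν a
  let ℓ := minPosRowsN ((M.filter fun p => p.2 = x).map Prod.fst)
  fun b =>
    let adj : Multiset (ℕ × ℤ) → Multiset (ℕ × ℤ) :=
      Multiset.map fun p => (p.1, p.2 + if ℓ ≤ p.1 then A b a else 0)
    if b = a then
      adj (M.erase (ℓ, x)) + (if ℓ = 1 then 0 else {(ℓ - 1, x + A a a / 2)})
    else adj (ν b)

/-- The crystal operator `e_a` on rigged configurations. -/
def eOp (A : I → I → ℤ) (a : I) (ν : RCraw I) : Option (RCraw I) :=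
  if A a a = 2 then
    let x := minWith0 ((ν a).map Prod.snd)
    if x = 0 then none else some (eRemove A a ν x)
  else
    if ν a = 0 ∨ minPosRows ((ν a).map Prod.snd) ≠ -A a a / 2 then none
    else some (eRemove A a ν (-A a a / 2))

/-- The multiset of coriggings `p_i^(a) - x` of the (positive length) rows of `ν^(a)`. -/
noncomputable def corigs (A : I → I → ℤ) (ν : RCraw I) (a : I) : Multiset ℤ :=
  (ν a).map fun p => vac A ν a p.1 - p.2

open scoped Classical in
/-- The star crystal operator `f_a^*`: add a box to a row of maximal length among the rows
of `ν^(a)` whose corigging equals the smallest corigging `x` (with the length-`0` rows of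
corigging `0` included), set the rigging of the new row so that its corigging is
`x - A a a / 2`, and keep all other riggings fixed. -/
noncomputable def fStar (A : I → I → ℤ) (a : I) (ν : RCraw I) : RCraw I :=
  let M := ν a
  let x := minWith0 (corigs A ν a)
  let ℓ := maxWith0 ((M.filter fun p => vac A ν a p.1 - p.2 = x).map Prod.fst)
  fun b =>
    if b = a then
      M.erase (ℓ, vac A ν a ℓ - x) + {(ℓ + 1, (vac A ν a (ℓ + 1) - A a a) - (x - A a a / 2))}
    else ν b

open scoped Classical in
/-- Auxiliary for `eStarOp`: remove a box from a row of minimal (positive) length among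
the rows of `ν^(a)` with corigging `x`, set its rigging so that its corigging is
`x - A a a / 2` (dropping the row if its length becomes `0`), and keep all other riggings
fixed. -/
noncomputable def eStarRemove (A : I → I → ℤ) (a : I) (ν : RCraw I) (x : ℤ) : RCraw I :=
  let M := ν a
  let ℓ := minPosRowsN ((M.filter fun p => vac A ν a p.1 - p.2 = x).map Prod.fst)
  fun b =>
    if b = a then
      M.erase (ℓ, vac A ν a ℓ - x) +
        (if ℓ = 1 then 0 else {(ℓ - 1, vac A ν a (ℓ - 1) - (x - A a a / 2))})
    else ν b

/-- The star crystal operator `e_a^*`. -/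
noncomputable def eStarOp (A : I → I → ℤ) (a : I) (ν : RCraw I) : Option (RCraw I) :=
  if A a a = 2 then
    let x := minWith0 (corigs A ν a)
    if x = 0 then none else some (eStarRemove A a ν x)
  else
    if ν a = 0 ∨ minPosRows (corigs A ν a) ≠ -A a a / 2 then none
    else some (eStarRemove A a ν (-A a a / 2))

/-- `RC(∞)`: the set of rigged configurations generated from the empty rigged
configuration by the operators `e_a`, `f_a`. -/
inductive RCinf (A : I → I → ℤ) : RCraw I → Prop
  | empty : RCinf A emptyRC
  | fstep (a : I) (ν : RCraw I) : RCinf A ν → RCinf A (fOp A a ν)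
  | estep (a : I) (ν ν' : RCraw I) : RCinf A ν → eOp A a ν = some ν' → RCinf A ν'

/-- `RC(∞)^*`: the set of rigged configurations generated from the empty rigged
configuration by the operators `e_a^*`, `f_a^*`. -/
inductive RCinfStar (A : I → I → ℤ) : RCraw I → Prop
  | empty : RCinfStar A emptyRC
  | fstep (a : I) (ν : RCraw I) : RCinfStar A ν → RCinfStar A (fStar A a ν)
  | estep (a : I) (ν ν' : RCraw I) : RCinfStar A ν → eStarOp A a ν = some ν' → RCinfStar A ν'

/-- Iteration of a partial map. -/
def iterOpt {α : Type*} (g : α → Option α) : ℕ → α → Option α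
  | 0, v => some v
  | k + 1, v => (iterOpt g k v).bind g

/-- `tε_a(ν,J) = max {k | e_a^k (ν,J) ≠ 0}`. -/
noncomputable def teRC (A : I → I → ℤ) (a : I) (ν : RCraw I) : ℕ :=
  sSup {k | iterOpt (eOp A a) k ν ≠ none}

/-- `tε_a^*(ν,J) = max {k | (e_a^*)^k (ν,J) ≠ 0}`. -/
noncomputable def teStarRC (A : I → I → ℤ) (a : I) (ν : RCraw I) : ℕ :=
  sSup {k | iterOpt (eStarOp A a) k ν ≠ none}

/-- `ε_a`: for real `a` the maximal number of applications of `e_a`, for imaginary `a`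
zero. -/
noncomputable def epsRC (A : I → I → ℤ) (a : I) (ν : RCraw I) : ℤ :=
  if A a a = 2 then (teRC A a ν : ℤ) else 0

/-- `φ_a(ν,J) = ⟨h_a, wt(ν,J)⟩ + ε_a(ν,J)`. -/
noncomputable def phiRC (A : I → I → ℤ) (a : I) (ν : RCraw I) : ℤ :=
  pInf A ν a + epsRC A a ν

/-- `ε_a^*`: for real `a` the maximal number of applications of `e_a^*`, for imaginary `a`
zero. -/
noncomputable def epsStarRC (A : I → I → ℤ) (a : I) (ν : RCraw I) : ℤ :=
  if A a a = 2 then (teStarRC A a ν : ℤ) else 0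

/-- `φ_a^*(ν,J) = ⟨h_a, wt(ν,J)⟩ + ε_a^*(ν,J)`. -/
noncomputable def phiStarRC (A : I → I → ℤ) (a : I) (ν : RCraw I) : ℤ :=
  pInf A ν a + epsStarRC A a ν

/-- The weight of a rigged configuration, as the coefficient function of
`-∑_a |ν^(a)| α_a`. -/
def wtRC (ν : RCraw I) : I → ℤ := fun b => -rcSize ν b

/-- For imaginary `a`, `κ_a(ν,J) = tε_a^*(ν,J)·A a a + ⟨h_a, wt(ν,J)⟩`. -/
noncomputable def kappaRC (A : I → I → ℤ) (a : I) (ν : RCraw I) : ℤ :=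
  (teStarRC A a ν : ℤ) * A a a + pInf A ν a

/-- For imaginary `a`, `κ_a^*(ν,J) = tε_a(ν,J)·A a a + ⟨h_a, wt(ν,J)⟩`. -/
noncomputable def kappaStarRC (A : I → I → ℤ) (a : I) (ν : RCraw I) : ℤ :=
  (teRC A a ν : ℤ) * A a a + pInf A ν a

section AuxFold
variable {α : Type*} [LinearOrder α]

lemma foldMin_le_init (s : Multiset α) (b : α) : s.fold min b ≤ b := by
  induction s using Multiset.induction_on with
  | empty => simp
  | cons a s ih => rw [Multiset.fold_cons_left]; exact le_trans (min_le_right _ _) ih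

lemma foldMin_le_mem {s : Multiset α} {x : α} (h : x ∈ s) (b : α) : s.fold min b ≤ x := by
  induction s using Multiset.induction_on with
  | empty => simp at h
  | cons a s ih =>
    rw [Multiset.fold_cons_left]
    rcases Multiset.mem_cons.mp h with rfl | h'
    · exact min_le_left _ _
    · exact le_trans (min_le_right _ _) (ih h')

lemma foldMin_mem_or (s : Multiset α) (b : α) : s.fold min b ∈ s ∨ s.fold min b = b := by
  induction s using Multiset.induction_on with
  | empty => simp
  | cons a s ih =>
    rw [Multiset.fold_cons_left]
    rcases le_total a (s.fold min b) with h | h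
    · left; rw [min_eq_left h]; exact Multiset.mem_cons_self _ _
    · rw [min_eq_right h]
      rcases ih with h' | h'
      · exact Or.inl (Multiset.mem_cons_of_mem h')
      · exact Or.inr h'

lemma le_foldMax_mem {s : Multiset α} {x : α} (h : x ∈ s) (b : α) : x ≤ s.fold max b := by
  induction s using Multiset.induction_on with
  | empty => simp at h
  | cons a s ih =>
    rw [Multiset.fold_cons_left]
    rcases Multiset.mem_cons.mp h with rfl | h'
    · exact le_max_left _ _
    · exact le_trans (ih h') (le_max_right _ _)

lemma foldMin_foldMax_mem {s : Multiset α} (h : s ≠ 0) (b : α) :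
    s.fold min (s.fold max b) ∈ s := by
  rcases foldMin_mem_or s (s.fold max b) with h' | h'
  · exact h'
  · obtain ⟨x, hx⟩ := Multiset.exists_mem_of_ne_zero h
    have h1 : s.fold min (s.fold max b) ≤ x := foldMin_le_mem hx _
    have h2 : x ≤ s.fold max b := le_foldMax_mem hx b
    have h3 : s.fold min (s.fold max b) = x := le_antisymm h1 (by rw [h']; exact h2)
    rwa [h3]

end AuxFold

lemma minWith0_le_zero (s : Multiset ℤ) : minWith0 s ≤ 0 := foldMin_le_init s 0
lemma minWith0_mem {s : Multiset ℤ} (h : minWith0 s ≠ 0) : minWith0 s ∈ s :=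
  (foldMin_mem_or s 0).resolve_right h
lemma minPosRows_mem {s : Multiset ℤ} (h : s ≠ 0) : minPosRows s ∈ s := foldMin_foldMax_mem h 0
lemma minPosRows_le {s : Multiset ℤ} {x : ℤ} (h : x ∈ s) : minPosRows s ≤ x := foldMin_le_mem h _
lemma minPosRows_eq {s : Multiset ℤ} {m : ℤ} (h1 : m ∈ s) (h2 : ∀ x ∈ s, m ≤ x) :
    minPosRows s = m :=
  le_antisymm (minPosRows_le h1) (h2 _ (minPosRows_mem (by rintro rfl; simp at h1)))
lemma minPosRowsN_mem {s : Multiset ℕ} (h : s ≠ 0) : minPosRowsN s ∈ s := foldMin_foldMax_mem h 0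
lemma minPosRowsN_le {s : Multiset ℕ} {x : ℕ} (h : x ∈ s) : minPosRowsN s ≤ x := foldMin_le_mem h _

section SizeM

/-- total number of boxes in one color -/
def sizeM (M : Multiset (ℕ × ℤ)) : ℕ := (M.map Prod.fst).sum

@[simp] lemma sizeM_zero : sizeM 0 = 0 := rfl
lemma sizeM_cons (p : ℕ × ℤ) (s : Multiset (ℕ × ℤ)) : sizeM (p ::ₘ s) = p.1 + sizeM s := by
  simp [sizeM]
lemma sizeM_add (s t : Multiset (ℕ × ℤ)) : sizeM (s + t) = sizeM s + sizeM t := by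
  simp [sizeM]
lemma sizeM_map {φ : ℕ × ℤ → ℕ × ℤ} {M : Multiset (ℕ × ℤ)} (h : ∀ p ∈ M, (φ p).1 = p.1) :
    sizeM (M.map φ) = sizeM M := by
  unfold sizeM
  rw [Multiset.map_map]
  exact congrArg Multiset.sum (Multiset.map_congr rfl fun p hp => h p hp)
lemma sizeM_erase {p : ℕ × ℤ} {M : Multiset (ℕ × ℤ)} (h : p ∈ M) :
    p.1 + sizeM (M.erase p) = sizeM M := by
  conv_rhs => rw [← Multiset.cons_erase h]
  rw [sizeM_cons]
lemma sizeM_eq_zero {M : Multiset (ℕ × ℤ)} (hpos : ∀ p ∈ M, 1 ≤ p.1) (h : sizeM M = 0) :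
    M = 0 := by
  by_contra hM
  obtain ⟨p, hp⟩ := Multiset.exists_mem_of_ne_zero hM
  have := sizeM_erase hp
  have := hpos p hp
  omega
lemma rcSize_eq_sizeM {I : Type*} (ν : RCraw I) (b : I) : rcSize ν b = (sizeM (ν b) : ℤ) := by
  unfold rcSize sizeM
  induction (ν b) using Multiset.induction_on with
  | empty => simp
  | cons a s ih => rw [Multiset.map_cons, Multiset.sum_cons, Multiset.map_cons,
      Multiset.sum_cons, Nat.cast_add, ih]
@[simp] lemma rcSize_zero_fun {I : Type*} (ν : RCraw I) (b : I) (h : ν b = 0) : rcSize ν b = 0 := by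
  rw [rcSize_eq_sizeM, h]; simp
lemma rcSize_nonneg {I : Type*} (ν : RCraw I) (b : I) : 0 ≤ rcSize ν b := by
  rw [rcSize_eq_sizeM]; positivity

end SizeM

section Chain

/-- the configuration `{(1,d),(1,3d),...,(1,(2k-1)d)}` -/
def chainRC (d : ℤ) (k : ℕ) : Multiset (ℕ × ℤ) :=
  (Multiset.range k).map fun j : ℕ => ((1 : ℕ), (2 * (j : ℤ) + 1) * d)

@[simp] lemma chainRC_zero (d : ℤ) : chainRC d 0 = 0 := rfl

lemma mem_chainRC {d : ℤ} {k : ℕ} {p : ℕ × ℤ} :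
    p ∈ chainRC d k ↔ ∃ j : ℕ, j < k ∧ p = (1, (2 * (j : ℤ) + 1) * d) := by
  simp only [chainRC, Multiset.mem_map, Multiset.mem_range]
  constructor
  · rintro ⟨j, hj, rfl⟩; exact ⟨j, hj, rfl⟩
  · rintro ⟨j, hj, rfl⟩; exact ⟨j, hj, rfl⟩

lemma chainRC_succ_top (d : ℤ) (k : ℕ) :
    chainRC d (k + 1) = (1, (2 * (k : ℤ) + 1) * d) ::ₘ chainRC d k := by
  rw [chainRC, Multiset.range_succ, Multiset.map_cons]; rfl

lemma range_succ_bot (n : ℕ) : Multiset.range (n + 1) = 0 ::ₘ (Multiset.range n).map Nat.succ := by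
  exact_mod_cast congrArg (Multiset.ofList) (@List.range_succ_eq_map n)

lemma chainRC_succ_bot (d : ℤ) (k : ℕ) :
    chainRC d (k + 1) = (1, d) ::ₘ (chainRC d k).map (fun p => (p.1, p.2 + 2 * d)) := by
  rw [chainRC, range_succ_bot, Multiset.map_cons, chainRC, Multiset.map_map, Multiset.map_map]
  congr 1
  · norm_num
  · apply Multiset.map_congr rfl
    intro j _
    simp only [Function.comp_apply, Nat.succ_eq_add_one, Prod.mk.injEq]
    refine ⟨trivial, by push_cast; ring⟩

lemma chainRC_fst {d : ℤ} {k : ℕ} {p : ℕ × ℤ} (h : p ∈ chainRC d k) : p.1 = 1 := by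
  obtain ⟨j, _, rfl⟩ := mem_chainRC.mp h; rfl

lemma chainRC_snd_pos {d : ℤ} (hd : 1 ≤ d) {k : ℕ} {p : ℕ × ℤ} (h : p ∈ chainRC d k) :
    d ≤ p.2 := by
  obtain ⟨j, _, rfl⟩ := mem_chainRC.mp h
  have : (0:ℤ) ≤ 2 * (j:ℤ) * d := by positivity
  simp only [Prod.snd]; nlinarith

lemma sizeM_chainRC (d : ℤ) (k : ℕ) : sizeM (chainRC d k) = k := by
  induction k with
  | zero => rfl
  | succ k ih => rw [chainRC_succ_top, sizeM_cons, ih]; omega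

lemma card_chainRC (d : ℤ) (k : ℕ) : Multiset.card (chainRC d k) = k := by
  induction k with
  | zero => rfl
  | succ k ih => rw [chainRC_succ_top, Multiset.card_cons, ih]

lemma chainRC_ne_zero (d : ℤ) (k : ℕ) : chainRC d (k + 1) ≠ 0 := by
  rw [chainRC_succ_top]; exact Multiset.cons_ne_zero

end Chain

section IterOpt

lemma iterOpt_succ_left {α : Type*} (g : α → Option α) (k : ℕ) (v : α) :
    iterOpt g (k + 1) v = (g v).bind (iterOpt g k) := by
  induction k generalizing v with
  | zero =>
    have h0 : ∀ w : α, iterOpt g 0 w = some w := fun _ => rfl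
    show (iterOpt g 0 v).bind g = (g v).bind (iterOpt g 0)
    rw [h0]
    cases hg : g v
    · simp [hg]
    · simp [hg, h0]
  | succ k ih =>
    show (iterOpt g (k + 1) v).bind g = _
    rw [ih]
    cases hg : g v with
    | none => simp
    | some w => simp only [Option.bind_some]; rfl

@[simp] lemma iterOpt_zero' {α : Type*} (g : α → Option α) (v : α) : iterOpt g 0 v = some v := rfl

end IterOpt

section Unfold
variable {I : Type*} [DecidableEq I]

/-- the row length selected by `eRemove` -/
def eL (a : I) (ν : RCraw I) (x : ℤ) : ℕ :=
  minPosRowsN (((ν a).filter fun p => p.2 = x).map Prod.fst)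

lemma eRemove_self (A : I → I → ℤ) (a : I) (ν : RCraw I) (x : ℤ) :
    eRemove A a ν x a =
      ((ν a).erase (eL a ν x, x)).map
        (fun p => (p.1, p.2 + if eL a ν x ≤ p.1 then A a a else 0)) +
      (if eL a ν x = 1 then 0 else {(eL a ν x - 1, x + A a a / 2)}) := by
  simp [eRemove, eL]; rfl

lemma eRemove_other (A : I → I → ℤ) (a : I) (ν : RCraw I) (x : ℤ) {b : I} (hb : b ≠ a) :
    eRemove A a ν x b =
      (ν b).map (fun p => (p.1, p.2 + if eL a ν x ≤ p.1 then A b a else 0)) := by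
  simp [eRemove, eL, hb]; rfl

open scoped Classical in
/-- the row length selected by `eStarRemove` -/
noncomputable def sL (A : I → I → ℤ) (a : I) (ν : RCraw I) (x : ℤ) : ℕ :=
  minPosRowsN (((ν a).filter fun p => vac A ν a p.1 - p.2 = x).map Prod.fst)

lemma eStarRemove_self (A : I → I → ℤ) (a : I) (ν : RCraw I) (x : ℤ) :
    eStarRemove A a ν x a =
      (ν a).erase (sL A a ν x, vac A ν a (sL A a ν x) - x) +
      (if sL A a ν x = 1 then 0
        else {(sL A a ν x - 1, vac A ν a (sL A a ν x - 1) - (x - A a a / 2))}) := by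
  simp [eStarRemove, sL]; rfl

lemma eStarRemove_other (A : I → I → ℤ) (a : I) (ν : RCraw I) (x : ℤ) {b : I} (hb : b ≠ a) :
    eStarRemove A a ν x b = ν b := by
  simp [eStarRemove, hb]

lemma eOp_imag {A : I → I → ℤ} {a : I} (h2 : A a a ≠ 2) (ν : RCraw I) :
    eOp A a ν =
      if ν a = 0 ∨ minPosRows ((ν a).map Prod.snd) ≠ -A a a / 2 then none
      else some (eRemove A a ν (-A a a / 2)) := by
  simp [eOp, h2]

lemma eStarOp_imag {A : I → I → ℤ} {a : I} (h2 : A a a ≠ 2) (ν : RCraw I) :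
    eStarOp A a ν =
      if ν a = 0 ∨ minPosRows (corigs A ν a) ≠ -A a a / 2 then none
      else some (eStarRemove A a ν (-A a a / 2)) := by
  simp [eStarOp, h2]

end Unfold

section Steps
variable {I : Type*} [DecidableEq I]

/-- all rows have positive length -/
def PosRC (ν : RCraw I) : Prop := ∀ b : I, ∀ p ∈ ν b, 1 ≤ p.1

lemma eRemove_spec {A : I → I → ℤ} {a : I} {ν : RCraw I} {x : ℤ}
    (hpos : PosRC ν) (hx : x ∈ (ν a).map Prod.snd) :
    (eL a ν x, x) ∈ ν a ∧ 1 ≤ eL a ν x := by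
  obtain ⟨p, hp, hpx⟩ := Multiset.mem_map.mp hx
  have hF : p ∈ (ν a).filter fun q => q.2 = x := Multiset.mem_filter.mpr ⟨hp, hpx⟩
  have hFm : (((ν a).filter fun q => q.2 = x).map Prod.fst) ≠ 0 := by
    intro h0
    have : p.1 ∈ (((ν a).filter fun q => q.2 = x).map Prod.fst) :=
      Multiset.mem_map.mpr ⟨p, hF, rfl⟩
    rw [h0] at this; simp at this
  have hmem : eL a ν x ∈ (((ν a).filter fun q => q.2 = x).map Prod.fst) :=
    minPosRowsN_mem hFm
  obtain ⟨q, hq, hq1⟩ := Multiset.mem_map.mp hmem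
  have hq' := Multiset.mem_filter.mp hq
  have hqe : q = (eL a ν x, x) := Prod.ext hq1 hq'.2
  exact ⟨hqe ▸ hq'.1, hq1 ▸ hpos a q hq'.1⟩

lemma eRemove_good {A : I → I → ℤ} {a : I} {ν : RCraw I} {x : ℤ}
    (hpos : PosRC ν) (hx : x ∈ (ν a).map Prod.snd) :
    PosRC (eRemove A a ν x) ∧ sizeM (eRemove A a ν x a) + 1 = sizeM (ν a) ∧
      ∀ b, b ≠ a → (sizeM (eRemove A a ν x b) = sizeM (ν b) ∧
        (ν b = 0 → eRemove A a ν x b = 0)) := by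
  obtain ⟨hrow, hℓ⟩ := eRemove_spec (A := A) hpos hx
  set ℓ := eL a ν x with hℓdef
  refine ⟨?_, ?_, ?_⟩
  · intro b p hp
    by_cases hb : b = a
    · subst hb
      rw [eRemove_self] at hp
      rcases Multiset.mem_add.mp hp with hp | hp
      · obtain ⟨q, hq, rfl⟩ := Multiset.mem_map.mp hp
        exact hpos b q (Multiset.mem_of_mem_erase hq)
      · by_cases h1 : ℓ = 1
        · rw [if_pos h1] at hp; simp at hp
        · rw [if_neg h1] at hp
          rw [Multiset.mem_singleton.mp hp]
          simp only [Prod.fst]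
          omega
    · rw [eRemove_other A a ν x hb] at hp
      obtain ⟨q, hq, rfl⟩ := Multiset.mem_map.mp hp
      exact hpos b q hq
  · rw [eRemove_self, sizeM_add,
      sizeM_map (φ := fun p => (p.1, p.2 + if eL a ν x ≤ p.1 then A a a else 0))
        (fun p hp => rfl)]
    simp only [← hℓdef]
    have h1 : ℓ + sizeM ((ν a).erase (ℓ, x)) = sizeM (ν a) := sizeM_erase hrow
    by_cases h2 : ℓ = 1
    · rw [if_pos h2]; simp only [sizeM_zero]; omega
    · rw [if_neg h2, ]
      have : sizeM {((ℓ - 1 : ℕ), x + A a a / 2)} = ℓ - 1 := by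
        show sizeM ((ℓ - 1, x + A a a / 2) ::ₘ 0) = ℓ - 1
        rw [sizeM_cons]; simp
      rw [this]; omega
  · intro b hb
    rw [eRemove_other A a ν x hb]
    constructor
    · exact sizeM_map (φ := fun p => (p.1, p.2 + if eL a ν x ≤ p.1 then A b a else 0))
        (fun p hp => rfl)
    · intro h; rw [h]; simp

lemma eOp_some_general {A : I → I → ℤ} {a : I} {ν ν' : RCraw I}
    (hpos : PosRC ν) (h : eOp A a ν = some ν') :
    ∃ x : ℤ, x ∈ (ν a).map Prod.snd ∧ ν' = eRemove A a ν x := by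
  by_cases h2 : A a a = 2
  · simp only [eOp, if_pos h2] at h
    split_ifs at h with hx
    refine ⟨minWith0 ((ν a).map Prod.snd), minWith0_mem hx, (Option.some_injective _ h).symm⟩
  · rw [eOp_imag h2] at h
    split_ifs at h with hc
    push_neg at hc
    refine ⟨-A a a / 2, ?_, (Option.some_injective _ h).symm⟩
    rw [← hc.2]
    exact minPosRows_mem (by simpa [Multiset.map_eq_zero] using hc.1)

lemma eOp_step {A : I → I → ℤ} {a : I} (h2 : A a a ≠ 2) {ν ν' : RCraw I}
    (hpos : PosRC ν) (h : eOp A a ν = some ν') :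
    PosRC ν' ∧ sizeM (ν' a) + 1 = sizeM (ν a) ∧ ν a ≠ 0 ∧
      minPosRows ((ν a).map Prod.snd) = -A a a / 2 ∧ ν' = eRemove A a ν (-A a a / 2) := by
  rw [eOp_imag h2] at h
  split_ifs at h with hc
  push_neg at hc
  have hν' : ν' = eRemove A a ν (-A a a / 2) := (Option.some_injective _ h).symm
  have hx : (-A a a / 2) ∈ (ν a).map Prod.snd := by
    rw [← hc.2]
    exact minPosRows_mem (by simpa [Multiset.map_eq_zero] using hc.1)
  obtain ⟨hp, hs, _⟩ := eRemove_good (A := A) hpos hx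
  exact ⟨hν' ▸ hp, hν' ▸ hs, hc.1, hc.2, hν'⟩

end Steps

section Steps2
variable {I : Type*} [DecidableEq I]

lemma eStarRemove_spec {A : I → I → ℤ} {a : I} {ν : RCraw I} {x : ℤ}
    (hpos : PosRC ν) (hx : x ∈ corigs A ν a) :
    (sL A a ν x, vac A ν a (sL A a ν x) - x) ∈ ν a ∧ 1 ≤ sL A a ν x := by
  classical
  obtain ⟨p, hp, hpx⟩ := Multiset.mem_map.mp hx
  have hF : p ∈ (ν a).filter fun q => vac A ν a q.1 - q.2 = x := Multiset.mem_filter.mpr ⟨hp, hpx⟩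
  have hFm : (((ν a).filter fun q => vac A ν a q.1 - q.2 = x).map Prod.fst) ≠ 0 := by
    intro h0
    have : p.1 ∈ (((ν a).filter fun q => vac A ν a q.1 - q.2 = x).map Prod.fst) :=
      Multiset.mem_map.mpr ⟨p, hF, rfl⟩
    rw [h0] at this; simp at this
  have hmem : sL A a ν x ∈ (((ν a).filter fun q => vac A ν a q.1 - q.2 = x).map Prod.fst) := by
    have := minPosRowsN_mem hFm
    convert this using 2; rfl
  obtain ⟨q, hq, hq1⟩ := Multiset.mem_map.mp hmem
  have hq' := Multiset.mem_filter.mp hq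
  have hqe : q = (sL A a ν x, vac A ν a (sL A a ν x) - x) := by
    refine Prod.ext hq1 ?_
    have := hq'.2
    rw [← hq1]
    omega
  exact ⟨hqe ▸ hq'.1, hq1 ▸ hpos a q hq'.1⟩

lemma eStarOp_step {A : I → I → ℤ} {a : I} (h2 : A a a ≠ 2) {ν ν' : RCraw I}
    (hpos : PosRC ν) (h : eStarOp A a ν = some ν') :
    PosRC ν' ∧ sizeM (ν' a) + 1 = sizeM (ν a) ∧ (∀ b, b ≠ a → ν' b = ν b) ∧ ν a ≠ 0 ∧
      minPosRows (corigs A ν a) = -A a a / 2 ∧ ν' = eStarRemove A a ν (-A a a / 2) := by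
  rw [eStarOp_imag h2] at h
  split_ifs at h with hc
  push_neg at hc
  have hν' : ν' = eStarRemove A a ν (-A a a / 2) := (Option.some_injective _ h).symm
  have hx : (-A a a / 2) ∈ corigs A ν a := by
    rw [← hc.2]
    refine minPosRows_mem ?_
    simpa [corigs, Multiset.map_eq_zero] using hc.1
  obtain ⟨hrow, hℓ⟩ := eStarRemove_spec hpos hx
  set x := -A a a / 2
  set ℓ := sL A a ν x with hℓdef
  have hposn : PosRC ν' := by
    intro b p hp
    rw [hν'] at hp
    by_cases hb : b = a
    · subst hb
      rw [eStarRemove_self] at hp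
      rcases Multiset.mem_add.mp hp with hp | hp
      · exact hpos b p (Multiset.mem_of_mem_erase hp)
      · by_cases h1 : ℓ = 1
        · rw [← hℓdef, if_pos h1] at hp; simp at hp
        · rw [← hℓdef, if_neg h1] at hp
          rw [Multiset.mem_singleton.mp hp]
          simp only [Prod.fst]
          omega
    · rw [eStarRemove_other A a ν x hb] at hp
      exact hpos b p hp
  have hsize : sizeM (ν' a) + 1 = sizeM (ν a) := by
    rw [hν', eStarRemove_self, sizeM_add, ← hℓdef]
    have h1 : ℓ + sizeM ((ν a).erase (ℓ, vac A ν a ℓ - x)) = sizeM (ν a) := sizeM_erase hrow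
    by_cases h1' : ℓ = 1
    · rw [if_pos h1']; simp only [sizeM_zero]; omega
    · rw [if_neg h1']
      have : sizeM {((ℓ - 1 : ℕ), vac A ν a (ℓ - 1) - (x - A a a / 2))} = ℓ - 1 := by
        show sizeM (_ ::ₘ 0) = ℓ - 1
        rw [sizeM_cons]; simp
      rw [this]; omega
  refine ⟨hposn, hsize, fun b hb => by rw [hν', eStarRemove_other A a ν x hb], hc.1, hc.2, hν'⟩

lemma fOp_pos {A : I → I → ℤ} (a : I) {ν : RCraw I} (hpos : PosRC ν) : PosRC (fOp A a ν) := by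
  intro b p hp
  by_cases hb : b = a
  · subst hb
    simp only [fOp] at hp
    rcases Multiset.mem_add.mp hp with hp | hp
    · obtain ⟨q, hq, rfl⟩ := Multiset.mem_map.mp hp
      exact hpos b q (Multiset.mem_of_mem_erase hq)
    · rw [Multiset.mem_singleton.mp hp]
      simp only [Prod.fst]
      omega
  · simp only [fOp, if_neg hb] at hp
    obtain ⟨q, hq, rfl⟩ := Multiset.mem_map.mp hp
    exact hpos b q hq

lemma fOp_support {A : I → I → ℤ} (a : I) (ν : RCraw I) {b : I} (hb : b ≠ a) (h : ν b = 0) :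
    fOp A a ν b = 0 := by
  simp [fOp, hb, h]

/-- the invariant carved out of `RC(∞)` membership -/
lemma rcinf_good {A : I → I → ℤ} {ν : RCraw I} (h : RCinf A ν) :
    PosRC ν ∧ {b : I | ν b ≠ 0}.Finite := by
  induction h with
  | empty =>
    refine ⟨fun b p hp => absurd hp (by simp [emptyRC]), ?_⟩
    have : {b : I | emptyRC b ≠ (0 : Multiset (ℕ × ℤ))} = ∅ := by
      ext b; simp [emptyRC]
    rw [this]; exact Set.finite_empty
  | fstep a ν hν ih =>
    obtain ⟨hpos, hfin⟩ := ih
    refine ⟨fOp_pos a hpos, ((hfin.union (Set.finite_singleton a)).subset ?_)⟩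
    intro b hb
    by_cases hba : b = a
    · exact Or.inr hba
    · left
      simp only [Set.mem_setOf_eq] at hb ⊢
      exact fun h0 => hb (fOp_support a ν hba h0)
  | estep a ν ν' hν he ih =>
    obtain ⟨hpos, hfin⟩ := ih
    obtain ⟨x, hx, rfl⟩ := eOp_some_general hpos he
    obtain ⟨hp, _, hother⟩ := eRemove_good (A := A) hpos hx
    refine ⟨hp, ((hfin.union (Set.finite_singleton a)).subset ?_)⟩
    intro b hb
    by_cases hba : b = a
    · exact Or.inr hba
    · left
      simp only [Set.mem_setOf_eq] at hb ⊢
      exact fun h0 => hb ((hother b hba).2 h0)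

end Steps2

section VacPinf
variable {I : Type*} [DecidableEq I]

/-- the vanishing of all interaction terms of color `a` -/
def S0 (A : I → I → ℤ) (a : I) (ν : RCraw I) : Prop := ∀ b, b ≠ a → A a b * rcSize ν b = 0

lemma rcSize_zero_of_S0 {A : I → I → ℤ} {a : I} {ν : RCraw I} (hpos : PosRC ν)
    {b : I} (hb : b ≠ a) (hS0 : S0 A a ν) (hAb : A a b ≠ 0) : ν b = 0 := by
  rcases mul_eq_zero.mp (hS0 b hb) with h | h
  · exact absurd h hAb
  · have h2 := rcSize_eq_sizeM ν b
    rw [h] at h2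
    exact sizeM_eq_zero (hpos b) (by exact_mod_cast h2.symm)

lemma vac_one {A : I → I → ℤ} {a : I} {ν : RCraw I} (hpos : PosRC ν) (hS0 : S0 A a ν) :
    vac A ν a 1 = -(A a a * (Multiset.card (ν a) : ℤ)) := by
  unfold vac
  rw [finsum_eq_single _ a ?_]
  · simp only [Nat.cast_one]
    have h1 : ((ν a).map fun p => min (1:ℤ) (p.1 : ℤ)).sum = (Multiset.card (ν a) : ℤ) := by
      have hcongr : (ν a).map (fun p => min (1:ℤ) (p.1 : ℤ)) = (ν a).map (fun _ => (1 : ℤ)) :=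
        Multiset.map_congr rfl (fun p hp => by
          have := hpos a p hp
          exact min_eq_left (by exact_mod_cast this))
      rw [hcongr, Multiset.map_const', Multiset.sum_replicate, nsmul_eq_mul, mul_one]
    rw [h1]
  · intro b hb
    by_cases hAb : A a b = 0
    · rw [hAb, zero_mul]
    · rw [rcSize_zero_of_S0 hpos hb hS0 hAb]
      simp

lemma pInf_split {A : I → I → ℤ} (hA : IsBorcherdsCartan A) {a : I} {ν : RCraw I}
    (hfin : {b : I | ν b ≠ 0}.Finite) :
    -(A a a * rcSize ν a) ≤ pInf A ν a ∧
      (pInf A ν a = -(A a a * rcSize ν a) ↔ S0 A a ν) := by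
  classical
  set f : I → ℤ := fun b => A a b * rcSize ν b with hf
  set F : Finset I := insert a hfin.toFinset with hF
  have hsupp : Function.support f ⊆ ↑F := by
    intro b hb
    simp only [Function.mem_support, hf] at hb
    by_cases hba : b = a
    · simp [hF, hba]
    · have : ν b ≠ 0 := by
        intro h0
        exact hb (by rw [rcSize_zero_fun ν b h0, mul_zero])
      simp only [hF, Finset.coe_insert, Set.mem_insert_iff]
      exact Or.inr (by simpa using this)
  have hsum : ∑ᶠ b, f b = ∑ b ∈ F, f b := finsum_eq_finset_sum_of_support_subset f hsupp
  have ha : a ∈ F := Finset.mem_insert_self _ _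
  have hsplit : ∑ b ∈ F, f b = f a + ∑ b ∈ F.erase a, f b := (Finset.add_sum_erase F f ha).symm
  have hterm : ∀ b ∈ F.erase a, f b ≤ 0 := fun b hb =>
    mul_nonpos_of_nonpos_of_nonneg
      (hA.offdiag a b (Ne.symm (Finset.ne_of_mem_erase hb))) (rcSize_nonneg ν b)
  have hT : ∑ b ∈ F.erase a, f b ≤ 0 := Finset.sum_nonpos hterm
  have hpI : pInf A ν a = -(f a + ∑ b ∈ F.erase a, f b) := by
    unfold pInf; rw [hsum, hsplit]
  have hfa : f a = A a a * rcSize ν a := rfl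
  constructor
  · rw [hpI, hfa]; linarith
  · rw [hpI, hfa]
    constructor
    · intro h
      have hT0 : ∑ b ∈ F.erase a, f b = 0 := by linarith
      intro b hb
      by_cases hbF : b ∈ F.erase a
      · exact (Finset.sum_eq_zero_iff_of_nonpos hterm).mp hT0 b hbF
      · have hbF' : b ∉ F := fun hbf => hbF (Finset.mem_erase.mpr ⟨hb, hbf⟩)
        have : ν b = 0 := by
          by_contra h0
          exact hbF' (by simp [hF, Finset.mem_insert, hfin.mem_toFinset.mpr h0])
        rw [rcSize_zero_fun ν b this, mul_zero]
    · intro h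
      have hT0 : ∑ b ∈ F.erase a, f b = 0 :=
        Finset.sum_eq_zero (fun b hb => h b (Finset.ne_of_mem_erase hb))
      rw [hT0]; ring

end VacPinf

section Iter
variable {I : Type*} [DecidableEq I]

lemma iter_e_spec {A : I → I → ℤ} {a : I} (h2 : A a a ≠ 2) :
    ∀ (k : ℕ) (ν ν' : RCraw I), PosRC ν → iterOpt (eOp A a) k ν = some ν' →
      PosRC ν' ∧ sizeM (ν' a) + k = sizeM (ν a) := by
  intro k
  induction k with
  | zero =>
    intro ν ν' hpos h
    obtain rfl : ν = ν' := Option.some_injective _ h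
    exact ⟨hpos, rfl⟩
  | succ k ih =>
    intro ν ν' hpos h
    rw [iterOpt_succ_left] at h
    cases he : eOp A a ν with
    | none => rw [he] at h; simp at h
    | some ν₁ =>
      rw [he, Option.bind_some] at h
      obtain ⟨hp1, hs1, _⟩ := eOp_step h2 hpos he
      obtain ⟨hp, hs⟩ := ih ν₁ ν' hp1 h
      exact ⟨hp, by omega⟩

lemma iter_estar_spec {A : I → I → ℤ} {a : I} (h2 : A a a ≠ 2) :
    ∀ (k : ℕ) (ν ν' : RCraw I), PosRC ν → iterOpt (eStarOp A a) k ν = some ν' →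
      PosRC ν' ∧ sizeM (ν' a) + k = sizeM (ν a) := by
  intro k
  induction k with
  | zero =>
    intro ν ν' hpos h
    obtain rfl : ν = ν' := Option.some_injective _ h
    exact ⟨hpos, rfl⟩
  | succ k ih =>
    intro ν ν' hpos h
    rw [iterOpt_succ_left] at h
    cases he : eStarOp A a ν with
    | none => rw [he] at h; simp at h
    | some ν₁ =>
      rw [he, Option.bind_some] at h
      obtain ⟨hp1, hs1, _⟩ := eStarOp_step h2 hpos he
      obtain ⟨hp, hs⟩ := ih ν₁ ν' hp1 h
      exact ⟨hp, by omega⟩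

lemma sSup_iter_facts {g : RCraw I → Option (RCraw I)} {ν : RCraw I} {s : ℕ}
    (hbound : ∀ (k : ℕ) (ν' : RCraw I), iterOpt g k ν = some ν' → k ≤ s) :
    sSup {k | iterOpt g k ν ≠ none} ≤ s ∧
      (sSup {k | iterOpt g k ν ≠ none} = s ↔ iterOpt g s ν ≠ none) := by
  have h0 : (0:ℕ) ∈ {k | iterOpt g k ν ≠ none} := by simp
  have hb : ∀ k ∈ {k | iterOpt g k ν ≠ none}, k ≤ s := by
    intro k hk
    obtain ⟨ν', hν'⟩ := Option.ne_none_iff_exists'.mp hk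
    exact hbound k ν' hν'
  have hbdd : BddAbove {k | iterOpt g k ν ≠ none} := ⟨s, fun k hk => hb k hk⟩
  have hle : sSup {k | iterOpt g k ν ≠ none} ≤ s := csSup_le ⟨0, h0⟩ hb
  refine ⟨hle, ?_, ?_⟩
  · intro h
    have := Nat.sSup_mem ⟨0, h0⟩ hbdd
    rwa [h] at this
  · intro h
    exact le_antisymm hle (le_csSup hbdd h)

end Iter

section ChainE
variable {I : Type*} [DecidableEq I] {A : I → I → ℤ} {a : I} {d : ℤ}

lemma minPosRowsN_singleton (x : ℕ) : minPosRowsN {x} = x := by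
  have h := minPosRowsN_mem (s := {x}) (by simp)
  rwa [Multiset.mem_singleton] at h

lemma aa_ne_two (hd : A a a = -(2 * d)) (hd1 : 1 ≤ d) : A a a ≠ 2 := by omega

lemma neg_aa_div (hd : A a a = -(2 * d)) : -A a a / 2 = d := by
  rw [hd, neg_neg]
  exact Int.mul_ediv_cancel_left d (by norm_num)

lemma aa_div (hd : A a a = -(2 * d)) : A a a / 2 = -d := by
  rw [hd, show -(2*d) = 2 * (-d) by ring]
  exact Int.mul_ediv_cancel_left (-d) (by norm_num)

lemma min_snd_chain (hd1 : 1 ≤ d) (k : ℕ) :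
    minPosRows ((chainRC d (k+1)).map Prod.snd) = d := by
  apply minPosRows_eq
  · refine Multiset.mem_map.mpr ⟨(1, d), ?_, rfl⟩
    exact mem_chainRC.mpr ⟨0, by omega, by norm_num⟩
  · intro x hx
    obtain ⟨p, hp, rfl⟩ := Multiset.mem_map.mp hx
    exact chainRC_snd_pos hd1 hp

lemma filter_chain_rig (hd1 : 1 ≤ d) (k : ℕ) :
    ((chainRC d (k+1)).filter fun p => p.2 = d) = {((1:ℕ), d)} := by
  have h0 : ((chainRC d k).map (fun p => (p.1, p.2 + 2 * d))).filter (fun p => p.2 = d) = 0 := by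
    rw [Multiset.filter_eq_nil]
    intro p hp
    obtain ⟨q, hq, rfl⟩ := Multiset.mem_map.mp hp
    have := chainRC_snd_pos hd1 hq
    simp only [Prod.snd]
    omega
  rw [chainRC_succ_bot, Multiset.filter_cons, h0, if_pos rfl, add_zero]

lemma eOp_chain_succ (hd : A a a = -(2 * d)) (hd1 : 1 ≤ d) {ν : RCraw I} {k : ℕ}
    (hν : ν a = chainRC d (k+1)) :
    ∃ ν', eOp A a ν = some ν' ∧ ν' a = chainRC d k := by
  have h2 := aa_ne_two hd hd1
  have hne : ν a ≠ 0 := by rw [hν]; exact chainRC_ne_zero d k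
  have hmin : minPosRows ((ν a).map Prod.snd) = -A a a / 2 := by
    rw [neg_aa_div hd, hν]; exact min_snd_chain hd1 k
  refine ⟨eRemove A a ν (-A a a / 2), ?_, ?_⟩
  · rw [eOp_imag h2, if_neg (by push_neg; exact ⟨hne, hmin⟩)]
  · rw [neg_aa_div hd, eRemove_self]
    have hL : eL a ν d = 1 := by
      unfold eL
      rw [hν, filter_chain_rig hd1 k]
      simp only [Multiset.map_singleton]
      exact minPosRowsN_singleton 1
    rw [hL, if_pos rfl, add_zero, hν, chainRC_succ_bot, Multiset.erase_cons_head,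
      Multiset.map_map]
    have hcongr : ∀ p ∈ chainRC d k,
        ((fun p => (p.1, p.2 + if 1 ≤ p.1 then A a a else 0)) ∘
          (fun p => (p.1, p.2 + 2 * d))) p = p := by
      intro p hp
      have h1 := chainRC_fst hp
      simp only [Function.comp_apply, h1, le_refl, if_pos, hd]
      rw [Prod.ext_iff]
      exact ⟨h1.symm, by first | (simp [hd]; ring) | simp [hd]⟩
    rw [Multiset.map_congr rfl hcongr, Multiset.map_id']

lemma iter_e_chain (hd : A a a = -(2 * d)) (hd1 : 1 ≤ d) :
    ∀ (k : ℕ) (ν : RCraw I), ν a = chainRC d k → iterOpt (eOp A a) k ν ≠ none := by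
  intro k
  induction k with
  | zero => intro ν _; simp
  | succ k ih =>
    intro ν hν
    rw [iterOpt_succ_left]
    obtain ⟨ν', he, hc⟩ := eOp_chain_succ hd hd1 hν
    rw [he, Option.bind_some]
    exact ih ν' hc

lemma e_full_chain (hd : A a a = -(2 * d)) (hd1 : 1 ≤ d) :
    ∀ (k : ℕ) (ν : RCraw I), PosRC ν → sizeM (ν a) = k →
      iterOpt (eOp A a) k ν ≠ none → ν a = chainRC d k := by
  have h2 := aa_ne_two hd hd1
  intro k
  induction k with
  | zero =>
    intro ν hpos hsz _
    rw [sizeM_eq_zero (hpos a) hsz]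
    rfl
  | succ k ih =>
    intro ν hpos hsz hit
    rw [iterOpt_succ_left] at hit
    cases he : eOp A a ν with
    | none => rw [he] at hit; simp at hit
    | some ν₁ =>
      rw [he, Option.bind_some] at hit
      obtain ⟨hp1, hs1, hne, hmin, hν₁⟩ := eOp_step h2 hpos he
      have hchain : ν₁ a = chainRC d k := ih ν₁ hp1 (by omega) hit
      rw [neg_aa_div hd] at hν₁ hmin
      have hx : d ∈ (ν a).map Prod.snd := by
        rw [← hmin]
        exact minPosRows_mem (by simpa [Multiset.map_eq_zero] using hne)
      obtain ⟨hrow, hL1⟩ := eRemove_spec (A := A) hpos hx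
      have hν₁a : ν₁ a = ((ν a).erase (eL a ν d, d)).map
          (fun p => (p.1, p.2 + if eL a ν d ≤ p.1 then A a a else 0)) +
          (if eL a ν d = 1 then 0 else {(eL a ν d - 1, d + A a a / 2)}) := by
        rw [hν₁, eRemove_self]
      by_cases hl : eL a ν d = 1
      · rw [hl, if_pos rfl, add_zero] at hν₁a
        have hmapeq : ((ν a).erase ((1:ℕ), d)).map (fun p => (p.1, p.2 + A a a)) =
            chainRC d k := by
          rw [← hchain, hν₁a]
          apply Multiset.map_congr rfl
          intro p hp
          have := hpos a p (Multiset.mem_of_mem_erase hp)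
          rw [if_pos this]
        have hid : ∀ p : ℕ × ℤ,
            ((fun p : ℕ × ℤ => (p.1, p.2 + 2 * d)) ∘ (fun p : ℕ × ℤ => (p.1, p.2 + A a a))) p
              = p := by
          intro p
          simp only [Function.comp_apply]
          rw [Prod.ext_iff]
          exact ⟨rfl, by first | (simp [hd]; ring) | simp [hd]⟩
        have herase : (ν a).erase ((1:ℕ), d) =
            (chainRC d k).map (fun p => (p.1, p.2 + 2 * d)) := by
          have := congrArg (Multiset.map (fun p : ℕ × ℤ => (p.1, p.2 + 2 * d))) hmapeq
          rwa [Multiset.map_map, Multiset.map_congr rfl (fun p _ => hid p),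
            Multiset.map_id'] at this
        have hconse : ((1:ℕ), d) ::ₘ (ν a).erase ((1:ℕ), d) = ν a :=
          Multiset.cons_erase (hl ▸ hrow)
        rw [← hconse, herase, ← chainRC_succ_bot]
      · exfalso
        have hmem : (eL a ν d - 1, d + A a a / 2) ∈ ν₁ a := by
          rw [hν₁a, if_neg hl]
          exact Multiset.mem_add.mpr (Or.inr (Multiset.mem_singleton_self _))
        rw [hchain] at hmem
        have := chainRC_snd_pos hd1 hmem
        rw [aa_div hd] at this
        simp only [Prod.snd] at this
        omega

end ChainE

section ChainS
variable {I : Type*} [DecidableEq I] {A : I → I → ℤ} {a : I} {d : ℤ}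

lemma vac_one_val (hd : A a a = -(2 * d)) {ν : RCraw I} (hpos : PosRC ν) (hS0 : S0 A a ν) :
    vac A ν a 1 = 2 * d * (Multiset.card (ν a) : ℤ) := by
  rw [vac_one hpos hS0, hd]; ring

lemma min_corigs_chain (hd : A a a = -(2 * d)) (hd1 : 1 ≤ d) {ν : RCraw I} {k : ℕ}
    (hpos : PosRC ν) (hS0 : S0 A a ν) (hν : ν a = chainRC d (k+1)) :
    minPosRows (corigs A ν a) = d := by
  have hcard : (Multiset.card (ν a) : ℤ) = (k:ℤ) + 1 := by
    rw [hν, card_chainRC]; push_cast; ring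
  have hvac : vac A ν a 1 = 2 * d * ((k:ℤ)+1) := by
    rw [vac_one_val hd hpos hS0, hcard]
  apply minPosRows_eq
  · refine Multiset.mem_map.mpr ⟨((1:ℕ), (2*(k:ℤ)+1)*d), ?_, ?_⟩
    · rw [hν, chainRC_succ_top]; exact Multiset.mem_cons_self _ _
    · show vac A ν a (1:ℕ) - (2*(k:ℤ)+1)*d = d
      rw [hvac]; ring
  · intro x hx
    obtain ⟨p, hp, rfl⟩ := Multiset.mem_map.mp hx
    obtain ⟨j, hj, rfl⟩ := mem_chainRC.mp (hν ▸ hp)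
    show d ≤ vac A ν a (1:ℕ) - (2*(j:ℤ)+1)*d
    rw [hvac]
    have hjk : (j:ℤ) ≤ (k:ℤ) := by exact_mod_cast Nat.lt_succ_iff.mp hj
    nlinarith

lemma estar_chain_succ (hd : A a a = -(2 * d)) (hd1 : 1 ≤ d) {ν : RCraw I} {k : ℕ}
    (hpos : PosRC ν) (hS0 : S0 A a ν) (hν : ν a = chainRC d (k+1)) :
    ∃ ν', eStarOp A a ν = some ν' ∧ ν' a = chainRC d k ∧ ∀ b, b ≠ a → ν' b = ν b := by
  classical
  have h2 := aa_ne_two hd hd1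
  have hne : ν a ≠ 0 := by rw [hν]; exact chainRC_ne_zero d k
  have hcard : (Multiset.card (ν a) : ℤ) = (k:ℤ) + 1 := by
    rw [hν, card_chainRC]; push_cast; ring
  have hvac : vac A ν a 1 = 2 * d * ((k:ℤ)+1) := by
    rw [vac_one_val hd hpos hS0, hcard]
  have hmin : minPosRows (corigs A ν a) = -A a a / 2 := by
    rw [neg_aa_div hd]; exact min_corigs_chain hd hd1 hpos hS0 hν
  refine ⟨eStarRemove A a ν (-A a a / 2), ?_, ?_, ?_⟩
  · rw [eStarOp_imag h2, if_neg (by push_neg; exact ⟨hne, hmin⟩)]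
  · rw [neg_aa_div hd, eStarRemove_self]
    have hfilter : (ν a).filter (fun p => vac A ν a p.1 - p.2 = d) =
        {((1:ℕ), (2*(k:ℤ)+1)*d)} := by
      have h0 : (chainRC d k).filter (fun p => vac A ν a p.1 - p.2 = d) = 0 := by
        rw [Multiset.filter_eq_nil]
        intro p hp
        obtain ⟨j, hj, rfl⟩ := mem_chainRC.mp hp
        show ¬ (vac A ν a (1:ℕ) - (2*(j:ℤ)+1)*d = d)
        rw [hvac]
        intro hcon
        have : 2 * d * ((k:ℤ) - j) = 0 := by linarith
        rcases mul_eq_zero.mp this with h | h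
        · omega
        · have : (j:ℤ) = (k:ℤ) := by linarith
          have : j = k := by exact_mod_cast this
          omega
      have htop : vac A ν a ((1:ℕ), (2*(k:ℤ)+1)*d).1 - ((1:ℕ), (2*(k:ℤ)+1)*d).2 = d := by
        show vac A ν a (1:ℕ) - (2*(k:ℤ)+1)*d = d
        rw [hvac]; ring
      rw [hν, chainRC_succ_top, Multiset.filter_cons, h0, if_pos htop, add_zero]
    have hsL : sL A a ν d = 1 := by
      unfold sL
      rw [Multiset.filter_congr (fun p _ => Iff.rfl), hfilter]
      simp only [Multiset.map_singleton]
      exact minPosRowsN_singleton 1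
    rw [hsL, if_pos rfl, add_zero]
    have hkey : ((1:ℕ), vac A ν a 1 - d) = ((1:ℕ), (2*(k:ℤ)+1)*d) := by
      rw [Prod.ext_iff]
      exact ⟨rfl, by show vac A ν a 1 - d = (2*(k:ℤ)+1)*d; rw [hvac]; ring⟩
    rw [hkey, hν, chainRC_succ_top, Multiset.erase_cons_head]
  · intro b hb
    rw [eStarRemove_other A a ν _ hb]

lemma rcSize_congr {ν ν' : RCraw I} {b : I} (h : ν' b = ν b) : rcSize ν' b = rcSize ν b := by
  unfold rcSize; rw [h]

lemma iter_estar_chain (hd : A a a = -(2 * d)) (hd1 : 1 ≤ d) :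
    ∀ (k : ℕ) (ν : RCraw I), PosRC ν → S0 A a ν → ν a = chainRC d k →
      iterOpt (eStarOp A a) k ν ≠ none := by
  have h2 := aa_ne_two hd hd1
  intro k
  induction k with
  | zero => intro ν _ _ _; simp
  | succ k ih =>
    intro ν hpos hS0 hν
    rw [iterOpt_succ_left]
    obtain ⟨ν', he, hc, hoth⟩ := estar_chain_succ hd hd1 hpos hS0 hν
    rw [he, Option.bind_some]
    obtain ⟨hp1, _, _⟩ := eStarOp_step h2 hpos he
    have hS0' : S0 A a ν' := fun b hb => by
      rw [rcSize_congr (hoth b hb)]; exact hS0 b hb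
    exact ih ν' hp1 hS0' hc

lemma estar_full_chain (hd : A a a = -(2 * d)) (hd1 : 1 ≤ d) :
    ∀ (k : ℕ) (ν : RCraw I), PosRC ν → S0 A a ν → sizeM (ν a) = k →
      iterOpt (eStarOp A a) k ν ≠ none → ν a = chainRC d k := by
  have h2 := aa_ne_two hd hd1
  intro k
  induction k with
  | zero =>
    intro ν hpos _ hsz _
    rw [sizeM_eq_zero (hpos a) hsz]
    rfl
  | succ k ih =>
    intro ν hpos hS0 hsz hit
    rw [iterOpt_succ_left] at hit
    cases he : eStarOp A a ν with
    | none => rw [he] at hit; simp at hit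
    | some ν₁ =>
      rw [he, Option.bind_some] at hit
      obtain ⟨hp1, hs1, hoth, hne, hmin, hν₁⟩ := eStarOp_step h2 hpos he
      have hS0' : S0 A a ν₁ := fun b hb => by
        rw [rcSize_congr (hoth b hb)]; exact hS0 b hb
      have hchain : ν₁ a = chainRC d k := ih ν₁ hp1 hS0' (by omega) hit
      rw [neg_aa_div hd] at hν₁ hmin
      have hx : d ∈ corigs A ν a := by
        rw [← hmin]
        refine minPosRows_mem ?_
        simpa [corigs, Multiset.map_eq_zero] using hne
      obtain ⟨hrow, hL1⟩ := eStarRemove_spec hpos hx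
      have hν₁a : ν₁ a = (ν a).erase (sL A a ν d, vac A ν a (sL A a ν d) - d) +
          (if sL A a ν d = 1 then 0
            else {(sL A a ν d - 1, vac A ν a (sL A a ν d - 1) - (d - A a a / 2))}) := by
        rw [hν₁, eStarRemove_self]
      by_cases hl : sL A a ν d = 1
      · rw [hl, if_pos rfl, add_zero] at hν₁a
        have hcard : (Multiset.card (ν a) : ℤ) = (k:ℤ) + 1 := by
          have h1 := Multiset.cons_erase (hl ▸ hrow)
          have h2' := congrArg Multiset.card h1
          rw [Multiset.card_cons] at h2'
          rw [← hν₁a, hchain, card_chainRC] at h2'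
          rw [← h2']
          push_cast; ring
        have hvac : vac A ν a 1 = 2 * d * ((k:ℤ)+1) := by
          rw [vac_one_val hd hpos hS0, hcard]
        have hkey : ((1:ℕ), vac A ν a 1 - d) = ((1:ℕ), (2*(k:ℤ)+1)*d) := by
          rw [Prod.ext_iff]
          exact ⟨rfl, by show vac A ν a 1 - d = (2*(k:ℤ)+1)*d; rw [hvac]; ring⟩
        have hconse := Multiset.cons_erase (hl ▸ hrow)
        have herase : (ν a).erase ((1:ℕ), vac A ν a 1 - d) = chainRC d k :=
          hν₁a.symm.trans hchain
        rw [← hconse, herase, hkey, ← chainRC_succ_top]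
      · exfalso
        have hmem : (sL A a ν d - 1, vac A ν a (sL A a ν d - 1) - (d - A a a / 2)) ∈ ν₁ a := by
          rw [hν₁a, if_neg hl]
          exact Multiset.mem_add.mpr (Or.inr (Multiset.mem_singleton_self _))
        rw [hchain] at hmem
        obtain ⟨j, hj, heq⟩ := mem_chainRC.mp hmem
        have hfst : sL A a ν d - 1 = 1 := by
          have := congrArg Prod.fst heq; simpa using this
        have hsnd : vac A ν a (sL A a ν d - 1) - (d - A a a / 2) = (2*(j:ℤ)+1)*d := by
          have := congrArg Prod.snd heq; simpa using this
        have hcard : (Multiset.card (ν a) : ℤ) = (k:ℤ) := by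
          have h1 := Multiset.cons_erase hrow
          have h2' := congrArg Multiset.card h1
          rw [Multiset.card_cons] at h2'
          have h3 := congrArg Multiset.card hν₁a
          rw [Multiset.card_add, if_neg hl, hchain, card_chainRC] at h3
          simp only [Multiset.card_singleton] at h3
          omega
        have hvac : vac A ν a 1 = 2 * d * (k:ℤ) := by
          rw [vac_one_val hd hpos hS0, hcard]
        rw [hfst, aa_div hd, hvac] at hsnd
        have hparity : 2*(k:ℤ) - 2 = 2*(j:ℤ) + 1 := by
          have hd0 : d ≠ 0 := by omega
          apply mul_right_cancel₀ hd0
          ring_nf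
          ring_nf at hsnd
          linarith
        omega

end ChainS


/-- For imaginary `a` and `(ν,J) ∈ RC(∞)`: `κ_a(ν,J) = 0` iff `κ_a^*(ν,J) = 0`. -/
theorem rc_kappa_kappa_star {I : Type*} [DecidableEq I] (A : I → I → ℤ)
    (hA : IsBorcherdsCartan A) :
    ∀ a : I, A a a ≤ 0 → ∀ ν : RCraw I, RCinf A ν →
      (kappaRC A a ν = 0 ↔ kappaStarRC A a ν = 0) := by
  intro a ha ν hν
  obtain ⟨hpos, hfin⟩ := rcinf_good hν
  rcases hA.diag a with h2' | ⟨hle, heven⟩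
  · omega
  · obtain ⟨r, hr⟩ := heven
    by_cases h0 : A a a = 0
    · unfold kappaRC kappaStarRC
      rw [h0]
      simp
    · obtain ⟨d, hd, hd1⟩ : ∃ d : ℤ, A a a = -(2*d) ∧ 1 ≤ d := ⟨-r, by omega, by omega⟩
      have h2 : A a a ≠ 2 := aa_ne_two hd hd1
      set s := sizeM (ν a) with hs
      have hboundE : ∀ (k : ℕ) (ν' : RCraw I), iterOpt (eOp A a) k ν = some ν' → k ≤ s := by
        intro k ν' h
        have := (iter_e_spec h2 k ν ν' hpos h).2
        omega
      have hboundS : ∀ (k : ℕ) (ν' : RCraw I), iterOpt (eStarOp A a) k ν = some ν' → k ≤ s := by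
        intro k ν' h
        have := (iter_estar_spec h2 k ν ν' hpos h).2
        omega
      obtain ⟨hleE, hiffE⟩ := sSup_iter_facts hboundE
      obtain ⟨hleS, hiffS⟩ := sSup_iter_facts hboundS
      have hteE_le : teRC A a ν ≤ s := hleE
      have hteS_le : teStarRC A a ν ≤ s := hleS
      have hpI := pInf_split hA (a := a) hfin
      have hrc : rcSize ν a = (s : ℤ) := rcSize_eq_sizeM ν a
      have hEchain : teRC A a ν = s ↔ ν a = chainRC d s := by
        unfold teRC
        rw [hiffE]
        constructor
        · intro h; exact e_full_chain hd hd1 s ν hpos rfl h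
        · intro h; exact iter_e_chain hd hd1 s ν h
      have hSchain : S0 A a ν → (teStarRC A a ν = s ↔ ν a = chainRC d s) := by
        intro hS0
        unfold teStarRC
        rw [hiffS]
        constructor
        · intro h; exact estar_full_chain hd hd1 s ν hpos hS0 rfl h
        · intro h; exact iter_estar_chain hd hd1 s ν hpos hS0 h
      have hkey : ∀ t : ℕ, t ≤ s → ((t:ℤ) * A a a + pInf A ν a = 0 ↔ (S0 A a ν ∧ t = s)) := by
        intro t hts
        constructor
        · intro h
          have h1 : pInf A ν a = 2*d*(t:ℤ) := by rw [hd] at h; linarith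
          have h2' : -(A a a * rcSize ν a) = 2*d*(s:ℤ) := by rw [hd, hrc]; ring
          have h3 : 2*d*(t:ℤ) ≤ 2*d*(s:ℤ) := by
            have hcast : (t:ℤ) ≤ (s:ℤ) := by exact_mod_cast hts
            nlinarith
          have h4 : 2*d*(s:ℤ) ≤ 2*d*(t:ℤ) := by
            have hbase := hpI.1
            rw [h2'] at hbase
            linarith
          have h5 : pInf A ν a = -(A a a * rcSize ν a) := by
            rw [h1, h2']; linarith
          have hS0 := hpI.2.mp h5
          have ht : (t:ℤ) = (s:ℤ) := by
            have h6 : 2*d*(t:ℤ) = 2*d*(s:ℤ) := le_antisymm h3 h4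
            have hne : (2*d) ≠ 0 := by omega
            exact mul_left_cancel₀ hne h6
          exact ⟨hS0, by exact_mod_cast ht⟩
        · rintro ⟨hS0, rfl⟩
          have h5 := hpI.2.mpr hS0
          rw [h5, hrc, hd]; ring
      unfold kappaRC kappaStarRC
      rw [hkey (teStarRC A a ν) hteS_le, hkey (teRC A a ν) hteE_le]
      constructor
      · rintro ⟨h1, h2''⟩
        exact ⟨h1, hEchain.mpr ((hSchain h1).mp h2'')⟩
      · rintro ⟨h1, h2''⟩
        exact ⟨h1, (hSchain h1).mpr (hEchain.mp h2'')⟩
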